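/- Let p < q be distinct primes and let ℓ = p^{u₁}·q^{u₂} with u₁, u₂ ≥ 1. Set d = ℓ/(pq). Let h be an integer with 1 ≤ h ≤ ℓ, p-adic valuation v_p(h) = u₁ − a₁ with a₁ ≥ 2. Consider the p integers h, h + ℓ/p, h + 2ℓ/p, …, h + (p−1)ℓ/p reduced modulo ℓ to representatives in {1, …, ℓ}. Then for any two distinct such representatives h' and h'', their residues modulo ℓ/q lie in distinct congruence classes modulo d when reduced to the interval (ℓ − ℓ/p − ℓ/q, ℓ − ℓ/p]; in particular, exactly one representative h₁ among them has its reduced residue in the subinterval (ℓ − ℓ/p − ℓ/q, ℓ − ℓ/p − ℓ/q + d). -/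

import Mathlib

/-- Let ℓ = p^{u₁}q^{u₂}, ℓ₁ = ℓ/p, ℓ₂ = ℓ/q, d = ℓ/(pq), z = ℓ − ℓ₁ − ℓ₂, and
    h with v_p(h) = u₁ − a₁, a₁ ≥ 2.  The reduced residues modulo ℓ₂ (in (z, z+ℓ₂])
    of the p numbers h + k·ℓ₁ lie in pairwise distinct subintervals of length d;
    in particular exactly one of them has its residue in (z, z + d). -/
theorem unique_representative_in_first_block
    (p q u₁ u₂ a₁ h ℓ ℓ₁ ℓ₂ d z : ℕ)
    (hp : p.Prime) (hq : q.Prime) (hpq : p < q)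
    (hu₁ : 1 ≤ u₁) (hu₂ : 1 ≤ u₂) (ha₁ : 2 ≤ a₁) (ha₁u : a₁ ≤ u₁)
    (hℓ : ℓ = p ^ u₁ * q ^ u₂) (hℓ₁ : ℓ₁ = ℓ / p) (hℓ₂ : ℓ₂ = ℓ / q)
    (hd : d = ℓ / (p * q)) (hz : z = ℓ - ℓ₁ - ℓ₂)
    (hh1 : 1 ≤ h) (hh2 : h ≤ ℓ) (hv : h.factorization p = u₁ - a₁) :
    (∀ k k' b b' : ℕ, k < p → k' < p → k ≠ k' →
      z < b → b ≤ z + ℓ₂ → b ≡ h + k * ℓ₁ [MOD ℓ₂] →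
      z < b' → b' ≤ z + ℓ₂ → b' ≡ h + k' * ℓ₁ [MOD ℓ₂] →
      (b - (z + 1)) / d ≠ (b' - (z + 1)) / d) ∧
    (∃! k : ℕ, k < p ∧ ∃ b : ℕ, z < b ∧ b < z + d ∧ b ≡ h + k * ℓ₁ [MOD ℓ₂]) := by
  obtain ⟨u₁', rfl⟩ : ∃ v, u₁ = v + 1 := ⟨u₁ - 1, by omega⟩
  obtain ⟨u₂', rfl⟩ : ∃ v, u₂ = v + 1 := ⟨u₂ - 1, by omega⟩
  have hp2 : 2 ≤ p := hp.two_le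
  have hq2 : 2 ≤ q := hq.two_le
  set D : ℕ := p ^ u₁' * q ^ u₂' with hD
  have hDpos : 0 < D :=
    Nat.mul_pos (Nat.pow_pos (by omega)) (Nat.pow_pos (by omega))
  have hℓD : ℓ = p * q * D := by rw [hℓ, hD]; ring
  have hdD : d = D := by
    rw [hd, hℓD, Nat.mul_div_cancel_left _ (by positivity)]
  have hℓ₁D : ℓ₁ = q * D := by
    rw [hℓ₁, hℓD, show p * q * D = p * (q * D) by ring, Nat.mul_div_cancel_left _ (by omega)]
  have hℓ₂D : ℓ₂ = p * D := by
    rw [hℓ₂, hℓD, show p * q * D = q * (p * D) by ring, Nat.mul_div_cancel_left _ (by omega)]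
  have hzD : z = p * q * D - q * D - p * D := by rw [hz, hℓD, hℓ₁D, hℓ₂D]
  have hdvdz : D ∣ z := by
    have e : p * q * D - q * D - p * D = (p * q - q - p) * D := by
      rw [Nat.sub_mul, Nat.sub_mul]
    rw [hzD, e]
    exact dvd_mul_left D _
  have hzlt : z + ℓ₂ ≤ ℓ := by
    have hqp : q * D + p * D ≤ p * q * D := by nlinarith
    rw [hzD, hℓ₂D, hℓD]; omega
  -- h is not divisible by D
  have hnd : ¬ D ∣ h := by
    intro hdh
    have h1 : p ^ u₁' ∣ h := dvd_trans (Dvd.intro _ rfl) hdh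
    have h2 : u₁' ≤ h.factorization p :=
      (Nat.Prime.pow_dvd_iff_le_factorization hp (by omega)).mp h1
    omega
  have hcop : Nat.gcd p q = 1 := (Nat.coprime_primes hp hq).mpr (by omega)
  have hmodD : ∀ (j b0 : ℕ), b0 ≡ h + j * ℓ₁ [MOD ℓ₂] → b0 ≡ h [MOD D] := by
    intro j b0 hcong
    have h1 : b0 ≡ h + j * ℓ₁ [MOD D] := by
      rw [hℓ₂D] at hcong; exact hcong.of_mul_left p
    have h2 : h + j * ℓ₁ ≡ h + 0 [MOD D] := by
      refine Nat.ModEq.add_left h ?_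
      refine (Nat.modEq_zero_iff_dvd).mpr ?_
      rw [hℓ₁D]; exact ⟨j * q, by ring⟩
    simpa using h1.trans h2
  -- core lemma
  have key : ∀ k k' b b' : ℕ, k < p → k' < p →
      z < b → b ≤ z + ℓ₂ → b ≡ h + k * ℓ₁ [MOD ℓ₂] →
      z < b' → b' ≤ z + ℓ₂ → b' ≡ h + k' * ℓ₁ [MOD ℓ₂] →
      (b - (z + 1)) / d = (b' - (z + 1)) / d → k = k' := by
    intro k k' b b' hk hk' hb1 hb2 hb3 hb'1 hb'2 hb'3 hblk
    have hbh : b ≡ h [MOD D] := hmodD k b hb3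
    have hb'h : b' ≡ h [MOD D] := hmodD k' b' hb'3
    have hbb' : b ≡ b' [MOD D] := hbh.trans hb'h.symm
    have hβ : (b - (z + 1)) ≡ (b' - (z + 1)) [MOD D] := by
      have e1 : (z + 1) + (b - (z + 1)) = b := by omega
      have e2 : (z + 1) + (b' - (z + 1)) = b' := by omega
      refine Nat.ModEq.add_left_cancel' (z + 1) ?_
      rw [e1, e2]; exact hbb'
    have hbeq : b = b' := by
      have hmod : (b - (z + 1)) % D = (b' - (z + 1)) % D := hβ
      rw [hdD] at hblk
      have h1 := Nat.div_add_mod (b - (z + 1)) D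
      have h2 := Nat.div_add_mod (b' - (z + 1)) D
      rw [hblk] at h1
      omega
    have hc : h + k * ℓ₁ ≡ h + k' * ℓ₁ [MOD ℓ₂] := (hb3.symm.trans (hbeq ▸ hb'3))
    have hc2 : k * ℓ₁ ≡ k' * ℓ₁ [MOD ℓ₂] := Nat.ModEq.add_left_cancel' h hc
    have hc3 : k * q ≡ k' * q [MOD p] := by
      refine Nat.ModEq.mul_right_cancel' (c := D) (by omega) ?_
      rw [hℓ₁D, hℓ₂D] at hc2
      calc k * q * D = k * (q * D) := by ring
        _ ≡ k' * (q * D) [MOD p * D] := hc2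
        _ = k' * q * D := by ring
    have hc4 : k ≡ k' [MOD p] := Nat.ModEq.cancel_right_of_coprime hcop hc3
    have : k % p = k' % p := hc4
    rwa [Nat.mod_eq_of_lt hk, Nat.mod_eq_of_lt hk'] at this
  have hppos : 0 < p := by omega
  have hdpos : 0 < d := by rw [hdD]; omega
  have hdle : d ≤ ℓ₂ := by rw [hdD, hℓ₂D]; exact Nat.le_mul_of_pos_left D hppos
  -- existence of a good k
  have hex : ∃ k, k < p ∧ ∃ b : ℕ, z < b ∧ b < z + d ∧ b ≡ h + k * ℓ₁ [MOD ℓ₂] := by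
    have hℓ₂pos : 0 < ℓ₂ := by omega
    set B : ℕ → ℕ := fun k => z + 1 + (h + k * ℓ₁ + ℓ - (z + 1)) % ℓ₂ with hB
    have hBrange : ∀ k, z < B k ∧ B k ≤ z + ℓ₂ := by
      intro k
      have := Nat.mod_lt (h + k * ℓ₁ + ℓ - (z + 1)) hℓ₂pos
      constructor <;> simp only [hB] <;> omega
    have hBcong : ∀ k, B k ≡ h + k * ℓ₁ [MOD ℓ₂] := by
      intro k
      have hsub : (z + 1) + (h + k * ℓ₁ + ℓ - (z + 1)) = h + k * ℓ₁ + ℓ := by omega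
      calc B k = (z + 1) + (h + k * ℓ₁ + ℓ - (z + 1)) % ℓ₂ := rfl
        _ ≡ (z + 1) + (h + k * ℓ₁ + ℓ - (z + 1)) [MOD ℓ₂] :=
            Nat.ModEq.add_left _ (Nat.mod_modEq _ _)
        _ = h + k * ℓ₁ + ℓ := hsub
        _ ≡ h + k * ℓ₁ + 0 [MOD ℓ₂] := by
            refine Nat.ModEq.add_left _ ?_
            refine (Nat.modEq_zero_iff_dvd).mpr ?_
            rw [hℓ₂D, hℓD]; exact ⟨q, by ring⟩
        _ = h + k * ℓ₁ := by omega
    have hBblock : ∀ k, (B k - (z + 1)) / d < p := by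
      intro k
      have h1 : B k - (z + 1) = (h + k * ℓ₁ + ℓ - (z + 1)) % ℓ₂ := by
        simp only [hB]; omega
      have h2 := Nat.mod_lt (h + k * ℓ₁ + ℓ - (z + 1)) hℓ₂pos
      rw [h1, hdD]
      refine Nat.div_lt_of_lt_mul ?_
      rw [mul_comm D p, ← hℓ₂D]
      exact h2
    set f : Fin p → Fin p := fun k => ⟨(B k.val - (z + 1)) / d, hBblock k.val⟩ with hf
    have hinj : Function.Injective f := by
      intro a b hab
      have : (B a.val - (z + 1)) / d = (B b.val - (z + 1)) / d := by
        simpa [hf] using congrArg Fin.val hab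
      exact Fin.ext (key a.val b.val (B a.val) (B b.val) a.isLt b.isLt
        (hBrange a.val).1 (hBrange a.val).2 (hBcong a.val)
        (hBrange b.val).1 (hBrange b.val).2 (hBcong b.val) this)
    have hsurj : Function.Surjective f := Finite.surjective_of_injective hinj
    obtain ⟨k, hk⟩ := hsurj ⟨0, hppos⟩
    have hk0 : (B k.val - (z + 1)) / d = 0 := by
      simpa [hf] using congrArg Fin.val hk
    have hblt : B k.val - (z + 1) < d := (Nat.div_eq_zero_iff.mp hk0).resolve_left (by omega)
    have hne : B k.val ≠ z + d := by
      intro heq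
      have hbh : B k.val ≡ h [MOD D] := hmodD k.val (B k.val) (hBcong k.val)
      have hDb : D ∣ B k.val := by
        rw [heq, hdD]; exact Nat.dvd_add hdvdz dvd_rfl
      obtain ⟨c, hc⟩ := hDb
      have h0 : B k.val % D = h % D := hbh
      have hb0 : B k.val % D = 0 := by rw [hc]; exact Nat.mul_mod_right D c
      exact hnd (Nat.dvd_of_mod_eq_zero (by omega))
    have hr1 := (hBrange k.val).1
    exact ⟨k.val, k.isLt, B k.val, hr1, by omega, hBcong k.val⟩
  obtain ⟨k, hkp, b, hb1, hb2, hb3⟩ := hex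
  refine ⟨?_, k, ⟨hkp, b, hb1, hb2, hb3⟩, ?_⟩
  · intro k k' b b' hk hk' hne hb1 hb2 hb3 hb'1 hb'2 hb'3 hblk
    exact hne (key k k' b b' hk hk' hb1 hb2 hb3 hb'1 hb'2 hb'3 hblk)
  · rintro k' ⟨hk', b', hb'1, hb'2, hb'3⟩
    refine key k' k b' b hk' hkp hb'1 (by omega) hb'3 hb1 (by omega) hb3 ?_
    have h1 : (b' - (z + 1)) / d = 0 := Nat.div_eq_of_lt (by omega)
    have h2 : (b - (z + 1)) / d = 0 := Nat.div_eq_of_lt (by omega)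
    rw [h1, h2]
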